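/- Let K = {u ∈ ℝ³ : cos(λ)·‖u‖ ≤ u₃} with λ ∈ (0, π/2). For u ∈ ℝ³ with (u₁,u₂) ≠ (0,0), the projection of u onto K is: u itself if cos(λ)‖u‖ ≤ u₃; the zero vector if sin(λ)‖u‖ ≤ -u₃; and otherwise ⟨u, u_b⟩·u_b where u_b = (sin(λ)/√(u₁²+u₂²))·(u₁, u₂, 0) + (0, 0, cos(λ)). -/

import Mathlib

open scoped InnerProductSpace
set_option maxHeartbeats 1000000

def IsEuclideanProj {E : Type*} [NormedAddCommGroup E]
    (S : Set E) (x p : E) : Prop :=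
  p ∈ S ∧ ∀ y ∈ S, ‖x - p‖ ≤ ‖x - y‖

lemma norm_sq_eq3 (x : EuclideanSpace ℝ (Fin 3)) : ‖x‖ ^ 2 = x 0 ^ 2 + x 1 ^ 2 + x 2 ^ 2 := by
  rw [EuclideanSpace.norm_eq, Real.sq_sqrt (by positivity)]
  simp [Fin.sum_univ_three, Real.norm_eq_abs, sq_abs]

lemma inner_eq3 (x y : EuclideanSpace ℝ (Fin 3)) :
    ⟪x, y⟫_ℝ = x 0 * y 0 + x 1 * y 1 + x 2 * y 2 := by
  simp [PiLp.inner_apply, RCLike.inner_apply, Fin.sum_univ_three]; ring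

lemma isEuclideanProj_of_inner {E : Type*} [NormedAddCommGroup E] [InnerProductSpace ℝ E]
    {S : Set E} {x p : E} (hp : p ∈ S)
    (h : ∀ y ∈ S, ⟪x - p, y - p⟫_ℝ ≤ 0) : IsEuclideanProj S x p := by
  refine ⟨hp, fun y hy => ?_⟩
  have h2 := h y hy
  have key : ‖x - p‖ ^ 2 ≤ ‖x - y‖ ^ 2 := by
    have hxy : x - y = (x - p) - (y - p) := by abel
    have hexp := norm_sub_sq_real (x - p) (y - p)
    rw [hxy, hexp]
    nlinarith [sq_nonneg ‖y - p‖]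
  have h3 : ‖x - p‖ = Real.sqrt (‖x - p‖ ^ 2) := (Real.sqrt_sq (norm_nonneg _)).symm
  rw [h3]
  calc Real.sqrt (‖x - p‖ ^ 2) ≤ Real.sqrt (‖x - y‖ ^ 2) := Real.sqrt_le_sqrt key
  _ = ‖x - y‖ := Real.sqrt_sq (norm_nonneg _)

lemma polar_inner_nonpos (lam : ℝ) (hlam : lam ∈ Set.Ioo 0 (Real.pi / 2))
    (w y : EuclideanSpace ℝ (Fin 3))
    (hw : Real.sin lam * ‖w‖ ≤ -(w 2)) (hy : Real.cos lam * ‖y‖ ≤ y 2) :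
    ⟪w, y⟫_ℝ ≤ 0 := by
  set s := Real.sin lam with hs_def
  set c := Real.cos lam with hc_def
  have hs : 0 < s := Real.sin_pos_of_pos_of_lt_pi hlam.1 (by linarith [Real.pi_pos, hlam.2])
  have hc : 0 < c := Real.cos_pos_of_mem_Ioo ⟨by linarith [Real.pi_pos, hlam.1], hlam.2⟩
  have hsc : s ^ 2 + c ^ 2 = 1 := Real.sin_sq_add_cos_sq lam
  have ha : ‖w‖ ^ 2 = w 0 ^ 2 + w 1 ^ 2 + w 2 ^ 2 := norm_sq_eq3 w
  have hb : ‖y‖ ^ 2 = y 0 ^ 2 + y 1 ^ 2 + y 2 ^ 2 := norm_sq_eq3 y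
  have ha0 : (0:ℝ) ≤ ‖w‖ := norm_nonneg w
  have hb0 : (0:ℝ) ≤ ‖y‖ := norm_nonneg y
  have hy2 : 0 ≤ y 2 := le_trans (by positivity) hy
  have hw2 : w 2 ≤ -(s * ‖w‖) := by linarith
  have h1 : w 2 * y 2 ≤ -(s * ‖w‖) * (c * ‖y‖) := by
    calc w 2 * y 2 ≤ -(s * ‖w‖) * y 2 := mul_le_mul_of_nonneg_right hw2 hy2
    _ ≤ -(s * ‖w‖) * (c * ‖y‖) := by
        apply mul_le_mul_of_nonpos_left hy
        nlinarith
  have hCS : (w 0 * y 0 + w 1 * y 1) ^ 2 ≤ (w 0 ^ 2 + w 1 ^ 2) * (y 0 ^ 2 + y 1 ^ 2) := by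
    nlinarith [sq_nonneg (w 0 * y 1 - w 1 * y 0)]
  have hc2 : c ^ 2 = 1 - s ^ 2 := by linarith
  have hww : s ^ 2 * ‖w‖ ^ 2 ≤ w 2 ^ 2 := by nlinarith [mul_nonneg hs.le ha0]
  have hyy : c ^ 2 * ‖y‖ ^ 2 ≤ y 2 ^ 2 := by nlinarith [mul_nonneg hc.le hb0]
  have hcw : (c * ‖w‖) ^ 2 = ‖w‖ ^ 2 - s ^ 2 * ‖w‖ ^ 2 := by rw [mul_pow, hc2]; ring
  have hsy : (s * ‖y‖) ^ 2 = ‖y‖ ^ 2 - c ^ 2 * ‖y‖ ^ 2 := by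
    rw [mul_pow, show s ^ 2 = 1 - c ^ 2 by linarith]; ring
  have hw' : w 0 ^ 2 + w 1 ^ 2 ≤ (c * ‖w‖) ^ 2 := by rw [hcw]; linarith
  have hy' : y 0 ^ 2 + y 1 ^ 2 ≤ (s * ‖y‖) ^ 2 := by rw [hsy]; linarith
  have hQ : (0:ℝ) ≤ c * ‖w‖ * (s * ‖y‖) := by positivity
  have hP : w 0 * y 0 + w 1 * y 1 ≤ c * ‖w‖ * (s * ‖y‖) := by
    nlinarith [mul_le_mul hw' hy' (by positivity) (by positivity)]
  rw [inner_eq3]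
  nlinarith [hP, h1]

theorem icecream_cone_projection_formula
    (lam : ℝ) (hlam : lam ∈ Set.Ioo 0 (Real.pi / 2))
    (u : EuclideanSpace ℝ (Fin 3)) (hu12 : ¬(u 0 = 0 ∧ u 1 = 0))
    (ub : EuclideanSpace ℝ (Fin 3))
    (hub0 : ub 0 = Real.sin lam / Real.sqrt ((u 0) ^ 2 + (u 1) ^ 2) * u 0)
    (hub1 : ub 1 = Real.sin lam / Real.sqrt ((u 0) ^ 2 + (u 1) ^ 2) * u 1)
    (hub2 : ub 2 = Real.cos lam) :
    let K : Set (EuclideanSpace ℝ (Fin 3)) := {w | Real.cos lam * ‖w‖ ≤ w 2}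
    (Real.cos lam * ‖u‖ ≤ u 2 → IsEuclideanProj K u u) ∧
    (Real.sin lam * ‖u‖ ≤ -(u 2) → IsEuclideanProj K u 0) ∧
    (¬(Real.cos lam * ‖u‖ ≤ u 2) → ¬(Real.sin lam * ‖u‖ ≤ -(u 2)) →
      IsEuclideanProj K u (⟪u, ub⟫_ℝ • ub)) := by
  intro K
  have hs : 0 < Real.sin lam := Real.sin_pos_of_pos_of_lt_pi hlam.1 (by linarith [Real.pi_pos, hlam.2])
  have hc : 0 < Real.cos lam := Real.cos_pos_of_mem_Ioo ⟨by linarith [Real.pi_pos, hlam.1], hlam.2⟩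
  have hsc : Real.sin lam ^ 2 + Real.cos lam ^ 2 = 1 := Real.sin_sq_add_cos_sq lam
  set s := Real.sin lam
  set c := Real.cos lam
  refine ⟨?_, ?_, ?_⟩
  · intro hu
    exact ⟨hu, fun y _ => by rw [sub_self, norm_zero]; exact norm_nonneg _⟩
  · intro hu
    apply isEuclideanProj_of_inner
    · show c * ‖(0 : EuclideanSpace ℝ (Fin 3))‖ ≤ (0 : EuclideanSpace ℝ (Fin 3)) 2
      simp
    · intro y hy
      simpa using polar_inner_nonpos lam hlam u y hu hy
  · intro h1 h2
    push_neg at h1 h2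
    set r := Real.sqrt ((u 0) ^ 2 + (u 1) ^ 2) with hr_def
    have h12 : 0 < (u 0) ^ 2 + (u 1) ^ 2 := by
      rcases not_and_or.mp hu12 with h | h <;> positivity
    have hr : 0 < r := Real.sqrt_pos.mpr h12
    have hr2 : r ^ 2 = (u 0) ^ 2 + (u 1) ^ 2 := Real.sq_sqrt h12.le
    have hnu : ‖u‖ ^ 2 = r ^ 2 + (u 2) ^ 2 := by rw [hr2, norm_sq_eq3]
    have hnu0 : 0 ≤ ‖u‖ := norm_nonneg u
    have hq : (s / r) ^ 2 * ((u 0) ^ 2 + (u 1) ^ 2) = s ^ 2 := by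
      rw [← hr2]; field_simp
    have hq2 : s / r * ((u 0) ^ 2 + (u 1) ^ 2) = s * r := by
      rw [← hr2]; field_simp
    have ht_inner : ⟪u, ub⟫_ℝ = s * r + c * u 2 := by
      rw [inner_eq3, hub0, hub1, hub2]
      linear_combination hq2
    set t := s * r + c * u 2 with ht_def
    have hα : 0 < c * r - s * u 2 := by
      rcases le_or_gt (u 2) 0 with h | h
      · nlinarith [mul_pos hc hr, mul_nonneg hs.le (neg_nonneg.mpr h)]
      · have k1 : 0 < c * ‖u‖ + u 2 := by nlinarith [mul_nonneg hc.le hnu0]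
        have k2 := mul_pos (sub_pos.mpr h1) k1
        have k3 : c ^ 2 * ‖u‖ ^ 2 = c ^ 2 * r ^ 2 + c ^ 2 * (u 2) ^ 2 := by
          linear_combination c ^ 2 * hnu
        have k4 : s ^ 2 * (u 2) ^ 2 = (u 2) ^ 2 - c ^ 2 * (u 2) ^ 2 := by
          linear_combination (u 2) ^ 2 * hsc
        have k5 : s ^ 2 * (u 2) ^ 2 < c ^ 2 * r ^ 2 := by nlinarith [k2, k3, k4]
        nlinarith [k5, mul_pos hc hr, mul_pos hs h]
    have ht : 0 < t := by
      rcases le_or_gt 0 (u 2) with h | h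
      · nlinarith [mul_pos hs hr, mul_nonneg hc.le h]
      · have k1 : 0 < s * ‖u‖ + -(u 2) := by nlinarith [mul_nonneg hs.le hnu0]
        have k2 := mul_pos (sub_pos.mpr h2) k1
        have k3 : s ^ 2 * ‖u‖ ^ 2 = s ^ 2 * r ^ 2 + s ^ 2 * (u 2) ^ 2 := by
          linear_combination s ^ 2 * hnu
        have k4 : c ^ 2 * (u 2) ^ 2 = (u 2) ^ 2 - s ^ 2 * (u 2) ^ 2 := by
          linear_combination (u 2) ^ 2 * hsc
        have k5 : c ^ 2 * (u 2) ^ 2 < s ^ 2 * r ^ 2 := by nlinarith [k2, k3, k4]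
        nlinarith [k5, mul_pos hs hr, mul_pos hc (neg_pos.mpr h)]
    set α := c * r - s * u 2 with hα_def
    set p := (⟪u, ub⟫_ℝ • ub : EuclideanSpace ℝ (Fin 3)) with hp_def
    have hp0 : p 0 = t * (s / r * u 0) := by
      rw [hp_def, ht_inner]; simp [hub0]
    have hp1 : p 1 = t * (s / r * u 1) := by
      rw [hp_def, ht_inner]; simp [hub1]
    have hp2 : p 2 = t * c := by
      rw [hp_def, ht_inner]; simp [hub2]
    have hubn : ‖ub‖ = 1 := by
      have h' : ‖ub‖ ^ 2 = 1 := by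
        rw [norm_sq_eq3, hub0, hub1, hub2]
        linear_combination hq + hsc
      calc ‖ub‖ = Real.sqrt (‖ub‖ ^ 2) := (Real.sqrt_sq (norm_nonneg _)).symm
      _ = Real.sqrt 1 := by rw [h']
      _ = 1 := Real.sqrt_one
    have hpn : ‖p‖ = t := by
      rw [hp_def, ht_inner, norm_smul, hubn, mul_one, Real.norm_eq_abs, abs_of_pos ht]
    have hip : ⟪u, p⟫_ℝ = t * t := by
      rw [hp_def, real_inner_smul_right, ht_inner]
    have hpp : ⟪p, p⟫_ℝ = t * t := by
      rw [real_inner_self_eq_norm_sq, hpn]; ring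
    have hup2 : (u - p) 2 = -(s * α) := by
      rw [PiLp.sub_apply, hp2]
      linear_combination (-(u 2)) * hsc
    have hupn : ‖u - p‖ = α := by
      have h' : ‖u - p‖ ^ 2 = α ^ 2 := by
        rw [norm_sub_sq_real, hip, hpn, hnu]
        linear_combination (-(r ^ 2 + (u 2) ^ 2)) * hsc
      calc ‖u - p‖ = Real.sqrt (‖u - p‖ ^ 2) := (Real.sqrt_sq (norm_nonneg _)).symm
      _ = Real.sqrt (α ^ 2) := by rw [h']
      _ = α := Real.sqrt_sq hα.le
    apply isEuclideanProj_of_inner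
    · show c * ‖p‖ ≤ p 2
      rw [hpn, hp2]; linarith
    · intro y hy
      have hz : ⟪u - p, p⟫_ℝ = 0 := by
        rw [inner_sub_left, hip, hpp]; ring
      have hsplit : ⟪u - p, y - p⟫_ℝ = ⟪u - p, y⟫_ℝ - ⟪u - p, p⟫_ℝ := inner_sub_right _ _ _
      rw [hsplit, hz, sub_zero]
      apply polar_inner_nonpos lam hlam _ _ _ hy
      rw [hupn, hup2]
      linarith
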